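/- Let F be a field of characteristic different from 2, and let Q be a quadratic form over F. If Q has a non-trivial zero over some finite field extension of F of odd degree, then Q has a non-trivial zero over F. (Springer's theorem) -/

import Mathlib

open Polynomial MvPolynomial

lemma coeff_prod_bdd {R : Type*} [CommSemiring R] {ι : Type*} (s : Finset ι)
    (g : ι → R[X]) (b : ι → ℕ) (h : ∀ i ∈ s, (g i).natDegree ≤ b i) :
    (∏ i ∈ s, g i).coeff (∑ i ∈ s, b i) = ∏ i ∈ s, (g i).coeff (b i) := by
  induction s using Finset.cons_induction with
  | empty => simp
  | cons a s ha ih =>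
    rw [Finset.prod_cons, Finset.sum_cons,
      Polynomial.coeff_mul_add_eq_of_natDegree_le (h a (Finset.mem_cons_self a s))
        ((Polynomial.natDegree_prod_le s g).trans (Finset.sum_le_sum fun i hi => h i (Finset.mem_cons_of_mem hi))),
      ih (fun i hi => h i (Finset.mem_cons_of_mem hi)), Finset.prod_cons]

section Eval

variable {F : Type*} [CommRing F] {n : ℕ}

lemma support_degree_eq {Q : MvPolynomial (Fin n) F} (hQ : Q.IsHomogeneous 2)
    {d : Fin n →₀ ℕ} (hd : d ∈ Q.support) : ∑ i : Fin n, d i = 2 := by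
  have h1 : d.degree = 2 := by
    by_contra h
    exact (MvPolynomial.mem_support_iff.mp hd) (hQ.coeff_eq_zero h)
  rw [← h1, Finsupp.degree]
  exact (Finset.sum_subset (Finset.subset_univ _)
    (fun i _ hi => Finsupp.notMem_support_iff.mp hi)).symm

lemma coeff_eval_poly (Q : MvPolynomial (Fin n) F) (hQ : Q.IsHomogeneous 2)
    (f : Fin n → F[X]) (m : ℕ) (hm : ∀ i, (f i).natDegree ≤ m) :
    (MvPolynomial.eval f (MvPolynomial.map Polynomial.C Q)).coeff (2 * m)
      = MvPolynomial.eval (fun i => (f i).coeff m) Q := by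
  rw [MvPolynomial.eval_map, MvPolynomial.eval₂_eq' Polynomial.C f Q,
    MvPolynomial.eval_eq']
  rw [Polynomial.finset_sum_coeff]
  refine Finset.sum_congr rfl fun d hd => ?_
  rw [Polynomial.coeff_C_mul]
  congr 1
  have h2 : 2 * m = ∑ i : Fin n, d i * m := by
    rw [← Finset.sum_mul, support_degree_eq hQ hd]
  rw [h2, coeff_prod_bdd _ _ _ (fun i _ =>
    (Polynomial.natDegree_pow_le).trans (Nat.mul_le_mul_left _ (hm i)))]
  exact Finset.prod_congr rfl fun i _ => Polynomial.coeff_pow_of_natDegree_le (hm i)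

lemma natDegree_eval_poly_le (Q : MvPolynomial (Fin n) F) (hQ : Q.IsHomogeneous 2)
    (f : Fin n → F[X]) (m : ℕ) (hm : ∀ i, (f i).natDegree ≤ m) :
    (MvPolynomial.eval f (MvPolynomial.map Polynomial.C Q)).natDegree ≤ 2 * m := by
  rw [MvPolynomial.eval_map, MvPolynomial.eval₂_eq' Polynomial.C f Q]
  refine Polynomial.natDegree_sum_le_of_forall_le _ _ fun d hd => ?_
  refine (Polynomial.natDegree_C_mul_le _ _).trans ?_
  refine (Polynomial.natDegree_prod_le _ _).trans ?_
  calc ∑ i : Fin n, ((f i) ^ d i).natDegree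
      ≤ ∑ i : Fin n, d i * m := Finset.sum_le_sum fun i _ =>
        (Polynomial.natDegree_pow_le).trans (Nat.mul_le_mul_left _ (hm i))
    _ = 2 * m := by rw [← Finset.sum_mul, support_degree_eq hQ hd]

-- scaling a homogeneous degree-2 polynomial
lemma eval_poly_smul (Q : MvPolynomial (Fin n) F) (hQ : Q.IsHomogeneous 2)
    (f : Fin n → F[X]) (g : F[X]) :
    MvPolynomial.eval (fun i => g * f i) (MvPolynomial.map Polynomial.C Q)
      = g ^ 2 * MvPolynomial.eval f (MvPolynomial.map Polynomial.C Q) := by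
  rw [MvPolynomial.eval_map, MvPolynomial.eval_map, MvPolynomial.eval₂_eq' Polynomial.C f Q,
    MvPolynomial.eval₂_eq' Polynomial.C (fun i => g * f i) Q, Finset.mul_sum]
  refine Finset.sum_congr rfl fun d hd => ?_
  rw [show ∀ a b : F[X], g ^ 2 * (a * b) = a * (g ^ 2 * b) by intros; ring]
  congr 1
  calc ∏ i : Fin n, (g * f i) ^ d i = ∏ i : Fin n, g ^ d i * (f i) ^ d i := by
        refine Finset.prod_congr rfl fun i _ => mul_pow g (f i) (d i)
    _ = (∏ i : Fin n, g ^ d i) * ∏ i : Fin n, (f i) ^ d i := Finset.prod_mul_distrib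
    _ = g ^ 2 * ∏ i : Fin n, (f i) ^ d i := by
        rw [Finset.prod_pow_eq_pow_sum, support_degree_eq hQ hd]

end Eval

open Polynomial MvPolynomial

section Aniso
variable {F : Type*} [Field F] {n : ℕ}

lemma aniso_eval_poly (Q : MvPolynomial (Fin n) F) (hQ : Q.IsHomogeneous 2)
    (hA : ∀ x : Fin n → F, x ≠ 0 → MvPolynomial.eval x Q ≠ 0)
    (f : Fin n → F[X]) (hf : f ≠ 0) (m : ℕ)
    (hm : ∀ i, (f i).natDegree ≤ m) (hm' : ∃ i, (f i).natDegree = m) :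
    MvPolynomial.eval f (MvPolynomial.map Polynomial.C Q) ≠ 0 ∧
    (MvPolynomial.eval f (MvPolynomial.map Polynomial.C Q)).natDegree = 2 * m := by
  have hc : (fun i => (f i).coeff m) ≠ 0 := by
    rcases Nat.eq_zero_or_pos m with hm0 | hm0
    · subst hm0
      obtain ⟨j, hj⟩ := Function.ne_iff.mp hf
      intro h
      have h0 : (f j).coeff 0 = 0 := congrFun h j
      exact hj (by
        rw [Polynomial.eq_C_of_natDegree_le_zero (hm j), h0, map_zero]; rfl)
    · obtain ⟨i, hi⟩ := hm'
      have hfi : f i ≠ 0 := fun h0 => by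
        rw [h0, Polynomial.natDegree_zero] at hi; omega
      intro h
      have : (f i).coeff m = 0 := congrFun h i
      rw [← hi] at this
      exact hfi (Polynomial.leadingCoeff_eq_zero.mp this)
  have hco : (MvPolynomial.eval f (MvPolynomial.map Polynomial.C Q)).coeff (2 * m) ≠ 0 := by
    rw [coeff_eval_poly Q hQ f m hm]
    exact hA _ hc
  have hne : MvPolynomial.eval f (MvPolynomial.map Polynomial.C Q) ≠ 0 := by
    intro h; rw [h] at hco; simp at hco
  exact ⟨hne, le_antisymm (natDegree_eval_poly_le Q hQ f m hm)
    (Polynomial.le_natDegree_of_ne_zero hco)⟩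

-- every polynomial of odd natDegree has a monic irreducible factor of odd natDegree
lemma exists_odd_irreducible_factor :
    ∀ N (w : F[X]), w.natDegree ≤ N → Odd w.natDegree →
    ∃ h : F[X], h.Monic ∧ Irreducible h ∧ Odd h.natDegree ∧ h ∣ w := by
  intro N
  induction N with
  | zero => intro w hw hodd; rw [Nat.le_zero.mp hw] at hodd; simp at hodd
  | succ N ih =>
    intro w hw hodd
    have hw0 : w ≠ 0 := fun h => by simp [h] at hodd
    have hwu : ¬IsUnit w := fun h => by
      rw [Polynomial.isUnit_iff] at h
      obtain ⟨r, _, hr⟩ := h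
      rw [← hr] at hodd; simp at hodd
    obtain ⟨q, hq_irr, hq_dvd⟩ := WfDvdMonoid.exists_irreducible_factor hwu hw0
    have hq0 : q ≠ 0 := hq_irr.ne_zero
    by_cases hqodd : Odd q.natDegree
    · have hlu : IsUnit (Polynomial.C (q.leadingCoeff)⁻¹) :=
        Polynomial.isUnit_C.mpr (IsUnit.inv (Ne.isUnit (Polynomial.leadingCoeff_ne_zero.mpr hq0)))
      refine ⟨q * Polynomial.C (q.leadingCoeff)⁻¹,
        Polynomial.monic_mul_leadingCoeff_inv hq0, ?_, ?_, ?_⟩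
      · exact ((associated_mul_unit_right q _ hlu).irreducible hq_irr)
      · rwa [Polynomial.natDegree_mul hq0 hlu.ne_zero, Polynomial.natDegree_C, add_zero]
      · exact ((associated_mul_unit_right q _ hlu).symm.dvd).trans hq_dvd
    · obtain ⟨u, hu⟩ := hq_dvd
      have hu0 : u ≠ 0 := fun h => by rw [h, mul_zero] at hu; exact hw0 hu
      have hdeg : w.natDegree = q.natDegree + u.natDegree := by
        rw [hu, Polynomial.natDegree_mul hq0 hu0]
      have hqpos : 0 < q.natDegree := hq_irr.natDegree_pos
      have huodd : Odd u.natDegree := by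
        rcases Nat.even_or_odd u.natDegree with he | ho
        · exfalso
          obtain ⟨a, ha⟩ := hodd
          obtain ⟨b, hb⟩ := he
          have : ¬ Odd q.natDegree := hqodd
          rw [Nat.not_odd_iff_even] at this
          obtain ⟨c, hc⟩ := this
          omega
        · exact ho
      have hule : u.natDegree ≤ N := by
        have : ¬ Odd q.natDegree := hqodd
        rw [Nat.not_odd_iff_even] at this
        have h2 : 2 ≤ q.natDegree := by
          obtain ⟨c, hc⟩ := this; omega
        omega
      obtain ⟨h, h1, h2, h3, h4⟩ := ih u hule huodd
      exact ⟨h, h1, h2, h3, h4.trans ⟨q, by rw [hu]; ring⟩⟩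

end Aniso

open Polynomial MvPolynomial

section Transfer
variable {F : Type*} [CommSemiring F] {n : ℕ}

-- evaluation commutes with algebra maps
lemma eval_map_ringHom {A B : Type*} [CommSemiring A] [CommSemiring B]
    [Algebra F A] [Algebra F B] (φ : A →+* B) (hφ : φ.comp (algebraMap F A) = algebraMap F B)
    (Q : MvPolynomial (Fin n) F) (x : Fin n → A) :
    MvPolynomial.eval (fun i => φ (x i)) (MvPolynomial.map (algebraMap F B) Q)
      = φ (MvPolynomial.eval x (MvPolynomial.map (algebraMap F A) Q)) := by
  rw [MvPolynomial.eval_map, MvPolynomial.eval_map,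
    MvPolynomial.eval₂_comp_left φ (algebraMap F A) x Q, hφ]
  rfl

-- transferring a nontrivial zero along an injective algebra hom
lemma zero_transfer_hom {A B : Type*} [CommRing A] [CommRing B]
    [Algebra F A] [Algebra F B] (φ : A →+* B) (hφ : φ.comp (algebraMap F A) = algebraMap F B)
    (hinj : Function.Injective φ)
    (Q : MvPolynomial (Fin n) F) (x : Fin n → A) (hx : x ≠ 0)
    (hz : MvPolynomial.eval x (MvPolynomial.map (algebraMap F A) Q) = 0) :
    ∃ y : Fin n → B, y ≠ 0 ∧
      MvPolynomial.eval y (MvPolynomial.map (algebraMap F B) Q) = 0 := by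
  refine ⟨fun i => φ (x i), ?_, ?_⟩
  · intro h
    apply hx
    funext i
    have := congrFun h i
    simpa using hinj (by simpa using this : φ (x i) = φ 0)
  · rw [eval_map_ringHom φ hφ Q x, hz, map_zero]

end Transfer

section FinrankOne
variable {F : Type*} [Field F] {n : ℕ}

-- a zero over a degree-1 extension descends
lemma zero_descend_finrank_one {E : Type*} [Field E] [Algebra F E]
    (h1 : Module.finrank F E = 1)
    (Q : MvPolynomial (Fin n) F) (x : Fin n → E) (hx : x ≠ 0)
    (hz : MvPolynomial.eval x (MvPolynomial.map (algebraMap F E) Q) = 0) :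
    ∃ y : Fin n → F, y ≠ 0 ∧ MvPolynomial.eval y Q = 0 := by
  have hbot : (⊥ : Subalgebra F E) = ⊤ := Subalgebra.bot_eq_top_of_finrank_eq_one h1
  have hsurj : ∀ e : E, ∃ a : F, algebraMap F E a = e := by
    intro e
    have : e ∈ (⊥ : Subalgebra F E) := hbot.symm ▸ Algebra.mem_top
    exact Algebra.mem_bot.mp this
  choose g hg using hsurj
  refine ⟨fun i => g (x i), ?_, ?_⟩
  · intro h
    apply hx
    funext i
    have h2 : g (x i) = 0 := congrFun h i
    rw [← hg (x i), h2, map_zero]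
    rfl
  · apply (algebraMap F E).injective
    have : (fun i => algebraMap F E (g (x i))) = x := funext fun i => hg (x i)
    calc algebraMap F E (MvPolynomial.eval (fun i => g (x i)) Q)
        = algebraMap F E (MvPolynomial.eval (fun i => g (x i))
            (MvPolynomial.map (algebraMap F F) Q)) := by
          rw [show (algebraMap F F) = RingHom.id F from rfl, MvPolynomial.map_id]
      _ = MvPolynomial.eval (fun i => algebraMap F E (g (x i)))
            (MvPolynomial.map (algebraMap F E) Q) := by
          have hcomp : (algebraMap F E).comp (algebraMap F F) = algebraMap F E := by
            ext a; simp
          rw [eval_map_ringHom (algebraMap F E) hcomp Q]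
      _ = 0 := by rw [this, hz]
    rw [map_zero]

end FinrankOne

open Polynomial MvPolynomial

section Simple
variable {F : Type*} [Field F] {n : ℕ}

lemma simple_step (Q : MvPolynomial (Fin n) F) (hQ : Q.IsHomogeneous 2)
    (hA : ∀ x : Fin n → F, x ≠ 0 → MvPolynomial.eval x Q ≠ 0)
    (p : F[X]) (hmonic : p.Monic) (hirr : Irreducible p) (hodd : Odd p.natDegree)
    (y : Fin n → AdjoinRoot p) (hy : y ≠ 0)
    (hz : MvPolynomial.eval y (MvPolynomial.map (algebraMap F (AdjoinRoot p)) Q) = 0) :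
    ∃ h : F[X], h.Monic ∧ Irreducible h ∧ Odd h.natDegree ∧ h.natDegree < p.natDegree ∧
      ∃ x : Fin n → AdjoinRoot h, x ≠ 0 ∧
        MvPolynomial.eval x (MvPolynomial.map (algebraMap F (AdjoinRoot h)) Q) = 0 := by
  classical
  have hp0 : p ≠ 0 := hmonic.ne_zero
  have hppos : 0 < p.natDegree := hirr.natDegree_pos
  -- choose representatives of degree < deg p
  have hsurj := AdjoinRoot.mk_surjective (g := p)
  choose g₁ hg₁ using fun i => hsurj (y i)
  set f : Fin n → F[X] := fun i => g₁ i %ₘ p with hfdef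
  have hmk : ∀ i, AdjoinRoot.mk p (f i) = y i := by
    intro i
    have h1 := Polynomial.modByMonic_add_div (g₁ i) p
    have : AdjoinRoot.mk p (g₁ i %ₘ p + p * (g₁ i /ₘ p)) = AdjoinRoot.mk p (g₁ i) := by
      rw [h1]
    rw [map_add, map_mul, AdjoinRoot.mk_self, zero_mul, add_zero] at this
    rw [hfdef]; rw [this, hg₁ i]
  have hfdeg : ∀ i, (f i).natDegree < p.natDegree := by
    intro i
    by_cases h0 : f i = 0
    · rw [h0, Polynomial.natDegree_zero]; exact hppos
    · exact Polynomial.natDegree_lt_natDegree h0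
        (Polynomial.degree_modByMonic_lt (g₁ i) hmonic)
  obtain ⟨i₀, hi₀⟩ := Function.ne_iff.mp hy
  have hfi₀ : f i₀ ≠ 0 := by
    intro h0
    apply hi₀
    rw [← hmk i₀, h0, map_zero]
    rfl
  -- divide by the gcd
  set g₀ : F[X] := Finset.univ.gcd f with hg₀def
  have hg₀0 : g₀ ≠ 0 := by
    intro h0
    exact hfi₀ ((Finset.gcd_eq_zero_iff.mp h0) i₀ (Finset.mem_univ i₀))
  set f' : Fin n → F[X] := fun i => f i / g₀ with hf'def
  have hgcd1 : Finset.univ.gcd f' = 1 :=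
    Finset.gcd_div_eq_one (f := f) (Finset.mem_univ i₀) hfi₀
  have hfact : ∀ i, f i = g₀ * f' i := by
    intro i
    rw [hf'def]
    exact (EuclideanDomain.mul_div_cancel' hg₀0
      (Finset.gcd_dvd (Finset.mem_univ i))).symm
  have hf'ne : f' ≠ 0 := by
    intro h0
    have h1 : (1 : F[X]) = 0 := by
      rw [← hgcd1, h0]
      exact Finset.gcd_eq_zero_iff.mpr fun i _ => rfl
    exact one_ne_zero h1
  have hf'deg : ∀ i, (f' i).natDegree < p.natDegree := by
    intro i
    by_cases h0 : f' i = 0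
    · rw [h0, Polynomial.natDegree_zero]; exact hppos
    · have hfi : f i ≠ 0 := by
        rw [hfact i]; exact mul_ne_zero hg₀0 h0
      have : (f i).natDegree = g₀.natDegree + (f' i).natDegree := by
        rw [hfact i, Polynomial.natDegree_mul hg₀0 h0]
      have := hfdeg i
      omega
  -- the evaluated polynomial
  set P' : F[X] := MvPolynomial.eval f' (MvPolynomial.map Polynomial.C Q) with hP'def
  set m : ℕ := Finset.univ.sup fun i => (f' i).natDegree with hmdef
  have hmle : ∀ i, (f' i).natDegree ≤ m := fun i =>
    Finset.le_sup (f := fun i => (f' i).natDegree) (Finset.mem_univ i)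
  have hmex : ∃ i, (f' i).natDegree = m := by
    obtain ⟨i, _, hi⟩ := Finset.exists_mem_eq_sup Finset.univ
      ⟨i₀, Finset.mem_univ i₀⟩ fun i => (f' i).natDegree
    exact ⟨i, hi.symm⟩
  obtain ⟨hP'ne, hP'deg⟩ := aniso_eval_poly Q hQ hA f' hf'ne m hmle hmex
  have hmlt : m < p.natDegree := by
    rw [hmdef]
    exact Finset.sup_lt_iff (by exact hppos) |>.mpr fun i _ => hf'deg i
  -- p divides P'
  have hpdvd : p ∣ P' := by
    have hCeq : (Polynomial.C : F →+* F[X]) = algebraMap F F[X] :=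
      (Polynomial.algebraMap_eq (R := F)).symm
    have hcomp : (AdjoinRoot.mk p).comp (algebraMap F F[X]) = algebraMap F (AdjoinRoot p) := by
      rw [AdjoinRoot.algebraMap_eq]
      rfl
    have hkey := eval_map_ringHom (AdjoinRoot.mk p) hcomp Q f
    have hPz : AdjoinRoot.mk p (MvPolynomial.eval f (MvPolynomial.map Polynomial.C Q)) = 0 := by
      rw [hCeq, ← hkey]
      have : (fun i => AdjoinRoot.mk p (f i)) = y := funext hmk
      rw [this, hz]
    have hsmul : MvPolynomial.eval f (MvPolynomial.map Polynomial.C Q) = g₀ ^ 2 * P' := by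
      have : f = fun i => g₀ * f' i := funext hfact
      rw [this, eval_poly_smul Q hQ f' g₀, hP'def]
    rw [hsmul] at hPz
    have hdvd0 : p ∣ g₀ ^ 2 * P' := AdjoinRoot.mk_eq_zero.mp hPz
    have hprime : Prime p := hirr.prime
    rcases hprime.dvd_or_dvd hdvd0 with hd | hd
    · exfalso
      have hdg : p ∣ g₀ := hprime.dvd_of_dvd_pow hd
      have : p.natDegree ≤ g₀.natDegree := Polynomial.natDegree_le_of_dvd hdg hg₀0
      have hgle : g₀.natDegree ≤ (f i₀).natDegree :=
        Polynomial.natDegree_le_of_dvd (Finset.gcd_dvd (Finset.mem_univ i₀)) hfi₀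
      have := hfdeg i₀
      omega
    · exact hd
  obtain ⟨w, hw⟩ := hpdvd
  rw [← hP'def] at hP'ne hP'deg
  have hw0 : w ≠ 0 := by
    intro h0; rw [h0, mul_zero] at hw; exact hP'ne hw
  have hwdeg : 2 * m = p.natDegree + w.natDegree := by
    rw [← hP'deg, hw, Polynomial.natDegree_mul hp0 hw0]
  have hwodd : Odd w.natDegree := by
    obtain ⟨a, ha⟩ := hodd
    rcases Nat.even_or_odd w.natDegree with ⟨b, hb⟩ | ho
    · omega
    · exact ho
  have hwlt : w.natDegree < p.natDegree := by omega
  -- extract an odd-degree irreducible factor h of w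
  obtain ⟨h, hhmon, hhirr, hhodd, hhdvd⟩ :=
    exists_odd_irreducible_factor w.natDegree w le_rfl hwodd
  have hhdeg : h.natDegree ≤ w.natDegree := Polynomial.natDegree_le_of_dvd hhdvd hw0
  refine ⟨h, hhmon, hhirr, hhodd, by omega, ?_⟩
  -- the zero over AdjoinRoot h
  refine ⟨fun i => AdjoinRoot.mk h (f' i), ?_, ?_⟩
  · intro hzero
    have hall : ∀ i, h ∣ f' i := by
      intro i
      have : AdjoinRoot.mk h (f' i) = 0 := congrFun hzero i
      exact AdjoinRoot.mk_eq_zero.mp this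
    have : h ∣ Finset.univ.gcd f' := Finset.dvd_gcd fun i _ => hall i
    rw [hgcd1] at this
    exact hhirr.not_isUnit (isUnit_of_dvd_one this)
  · have hcomp : (AdjoinRoot.mk h).comp (algebraMap F F[X]) = algebraMap F (AdjoinRoot h) := by
      rw [AdjoinRoot.algebraMap_eq]
      rfl
    rw [eval_map_ringHom (AdjoinRoot.mk h) hcomp Q f']
    rw [← Polynomial.algebraMap_eq] at hP'def
    rw [← hP'def, hw, map_mul]
    have : AdjoinRoot.mk h w = 0 := AdjoinRoot.mk_eq_zero.mpr hhdvd
    rw [this, mul_zero]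

end Simple

open Polynomial MvPolynomial

section Descent
variable {F : Type*} [Field F] {n : ℕ}

lemma adjoinRoot_zero_descend (Q : MvPolynomial (Fin n) F) (hQ : Q.IsHomogeneous 2) :
    ∀ N (p : F[X]), p.natDegree ≤ N → p.Monic → Irreducible p → Odd p.natDegree →
    (∃ y : Fin n → AdjoinRoot p, y ≠ 0 ∧
      MvPolynomial.eval y (MvPolynomial.map (algebraMap F (AdjoinRoot p)) Q) = 0) →
    ∃ x : Fin n → F, x ≠ 0 ∧ MvPolynomial.eval x Q = 0 := by
  intro N
  induction N with
  | zero =>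
    intro p hN _ hirr _ _
    exact absurd (Nat.le_zero.mp hN) (Nat.pos_iff_ne_zero.mp hirr.natDegree_pos)
  | succ N ih =>
    intro p hN hmonic hirr hodd ⟨y, hy, hz⟩
    haveI := Fact.mk hirr
    by_cases h1 : p.natDegree = 1
    · have hfr : Module.finrank F (AdjoinRoot p) = 1 := by
        have := (AdjoinRoot.powerBasis (hmonic.ne_zero)).finrank
        rw [this]
        simpa using h1
      exact zero_descend_finrank_one hfr Q y hy hz
    · by_cases hex : ∃ x : Fin n → F, x ≠ 0 ∧ MvPolynomial.eval x Q = 0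
      · exact hex
      · push_neg at hex
        have hA : ∀ x : Fin n → F, x ≠ 0 → MvPolynomial.eval x Q ≠ 0 := hex
        obtain ⟨h, hhmon, hhirr, hhodd, hhlt, hzero⟩ :=
          simple_step Q hQ hA p hmonic hirr hodd y hy hz
        exact ih h (by omega) hhmon hhirr hhodd hzero

end Descent

open Polynomial MvPolynomial Module

section Main
variable {n : ℕ}

theorem springer_main (F : Type*) [Field F]
    (E : Type*) [Field E] [Algebra F E] [FiniteDimensional F E]
    (hodd : Odd (Module.finrank F E))
    (Q : MvPolynomial (Fin n) F) (hQ : Q.IsHomogeneous 2)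
    (hzero : ∃ x : Fin n → E, x ≠ 0 ∧
      MvPolynomial.eval x (MvPolynomial.map (algebraMap F E) Q) = 0) :
    ∃ x : Fin n → F, x ≠ 0 ∧ MvPolynomial.eval x Q = 0 := by
  obtain ⟨x, hx, hz⟩ := hzero
  have H : ∀ (d : ℕ) (K : IntermediateField F E), Module.finrank ↥K E = d →
      ∃ y : Fin n → ↥K, y ≠ 0 ∧
        MvPolynomial.eval y (MvPolynomial.map (algebraMap F ↥K) Q) = 0 := by
    intro d
    induction d using Nat.strong_induction_on with
    | _ d ih =>
      intro K hK
      -- the tower F ⊆ K ⊆ E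
      have hKodd : Odd (Module.finrank ↥K E) := by
        have hmul : Module.finrank F ↥K * Module.finrank ↥K E = Module.finrank F E :=
          Module.finrank_mul_finrank F ↥K E
        rw [← hmul] at hodd
        exact (Nat.odd_mul.mp hodd).2
      -- the zero over E, rewritten over the K-structure
      have hzK : MvPolynomial.eval x
          (MvPolynomial.map (algebraMap ↥K E) (MvPolynomial.map (algebraMap F ↥K) Q)) = 0 := by
        rw [MvPolynomial.map_map, ← IsScalarTower.algebraMap_eq F ↥K E]
        exact hz
      by_cases hd1 : Module.finrank ↥K E = 1
      · exact zero_descend_finrank_one hd1 (MvPolynomial.map (algebraMap F ↥K) Q) x hx hzK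
      · -- pick θ ∉ K
        have hgt1 : 1 < Module.finrank ↥K E := by
          have hpos : 0 < Module.finrank ↥K E := Module.finrank_pos
          omega
        obtain ⟨θ, hθ⟩ : ∃ θ : E, θ ∉ K := by
          by_contra hall
          push_neg at hall
          have hKtop : K = ⊤ :=
            IntermediateField.ext fun e => ⟨fun _ => IntermediateField.mem_top, fun _ => hall e⟩
          rw [hKtop] at hgt1
          rw [IntermediateField.finrank_top] at hgt1
          omega
        -- adjoin θ to K
        set L : IntermediateField ↥K E := IntermediateField.adjoin ↥K {θ} with hLdef
        have hint : IsIntegral ↥K θ := IsIntegral.of_finite ↥K θ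
        have hfrk : Module.finrank ↥K E = Module.finrank ↥K ↥L * Module.finrank ↥L E :=
          (Module.finrank_mul_finrank ↥K ↥L E).symm
        have hL1 : Module.finrank ↥K ↥L ≠ 1 := by
          intro h1
          have hLbot : L = ⊥ := IntermediateField.finrank_eq_one_iff.mp h1
          have hmem : θ ∈ L := IntermediateField.mem_adjoin_simple_self ↥K θ
          rw [hLbot, IntermediateField.mem_bot] at hmem
          obtain ⟨k, hk⟩ := hmem
          apply hθ
          rw [← hk]
          exact k.2
        have hLgt : 1 < Module.finrank ↥K ↥L := by
          have hpos : 0 < Module.finrank ↥K ↥L := Module.finrank_pos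
          omega
        have hLElt : Module.finrank ↥L E < d := by
          rw [← hK, hfrk]
          have hbpos : 0 < Module.finrank ↥L E := Module.finrank_pos
          exact (Nat.lt_mul_iff_one_lt_left hbpos).mpr hLgt
        -- restrict scalars to get an intermediate field of F ⊆ E
        set K' : IntermediateField F E := IntermediateField.restrictScalars F L with hK'def
        have hK'rank : Module.finrank ↥K' E = Module.finrank ↥L E := rfl
        obtain ⟨y', hy', hzy'⟩ := ih (Module.finrank ↥L E) hLElt K' hK'rank
        -- reinterpret the zero over L as a zero of the K-form
        set QK : MvPolynomial (Fin n) ↥K := MvPolynomial.map (algebraMap F ↥K) Q with hQKdef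
        have hQK : QK.IsHomogeneous 2 := hQ.map _
        have hcomp : (algebraMap ↥K ↥L).comp (algebraMap F ↥K) = algebraMap F ↥K' := by
          ext a
          rfl
        have hzL : MvPolynomial.eval y' (MvPolynomial.map (algebraMap ↥K ↥L) QK) = 0 := by
          rw [hQKdef, MvPolynomial.map_map, hcomp]
          exact hzy'
        -- transfer to the AdjoinRoot model of the simple extension
        have e := IntermediateField.adjoinRootEquivAdjoin ↥K hint
        obtain ⟨y'', hy'', hzy''⟩ := zero_transfer_hom (F := ↥K) (e.symm : ↥L →ₐ[↥K] AdjoinRoot (minpoly ↥K θ)).toRingHom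
          (by ext k; simp) e.symm.injective QK y' hy' hzL
        -- descend through the AdjoinRoot
        have hodd' : Odd (Module.finrank ↥K ↥L) := by
          rw [hfrk] at hKodd
          exact (Nat.odd_mul.mp hKodd).1
        have hmindeg : (minpoly ↥K θ).natDegree = Module.finrank ↥K ↥L :=
          (IntermediateField.adjoin.finrank hint).symm
        exact adjoinRoot_zero_descend QK hQK (minpoly ↥K θ).natDegree (minpoly ↥K θ) le_rfl
          (minpoly.monic hint) (minpoly.irreducible hint) (by rw [hmindeg]; exact hodd')
          ⟨y'', hy'', hzy''⟩
  obtain ⟨y, hy, hzy⟩ := H (Module.finrank ↥(⊥ : IntermediateField F E) E) ⊥ rfl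
  have hbe := IntermediateField.botEquiv F E
  obtain ⟨z, hz1, hz2⟩ := zero_transfer_hom (hbe : _ ≃ₐ[F] F).toRingHom
    (by ext a; simp) hbe.injective Q y hy hzy
  refine ⟨z, hz1, ?_⟩
  rw [show (algebraMap F F) = RingHom.id F from rfl, MvPolynomial.map_id] at hz2
  exact hz2

end Main


/-- Springer's theorem: a quadratic form over a field of characteristic ≠ 2
which has a non-trivial zero over an odd-degree extension has one over the
base field. -/
theorem springer_odd_degree
    (F : Type*) [Field F] (hchar : ringChar F ≠ 2)
    (E : Type*) [Field E] [Algebra F E] [FiniteDimensional F E]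
    (hodd : Odd (Module.finrank F E))
    (n : ℕ) (Q : MvPolynomial (Fin n) F) (hQ : Q.IsHomogeneous 2)
    (hzero : ∃ x : Fin n → E, x ≠ 0 ∧
      MvPolynomial.eval x (MvPolynomial.map (algebraMap F E) Q) = 0) :
    ∃ x : Fin n → F, x ≠ 0 ∧ MvPolynomial.eval x Q = 0 :=
  springer_main F E hodd Q hQ hzero
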